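/- Let E be a KB-space, i.e., a Banach lattice in which every increasing norm-bounded sequence of positive elements is norm convergent. Then every norm bounded laterally Cauchy sequence (x_n) in E (meaning sup_n ‖x_n‖ < ∞ and x_n ⊑ x_m for all n ≤ m) laterally norm converges: there exists x ∈ E with x_n ⊑ x for all n and ‖x_n − x‖ → 0. -/

import Mathlib

open Filter

/-- In a Riesz space, `y` is a fragment of `x` (notation `y ⊑ x`) if `|y| ⊓ |x - y| = 0`. -/
def Fragment {E : Type*} [Lattice E] [AddCommGroup E] (y x : E) : Prop :=
  |y| ⊓ |x - y| = 0

private lemma abs_add_of_disj {E : Type*} [Lattice E] [AddCommGroup E]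
    [CovariantClass E E (· + ·) (· ≤ ·)] (a b : E) (h : |a| ⊓ |b| = 0) :
    |a + b| = |a| + |b| := by
  refine le_antisymm (abs_add_le _ _) ?_
  have hsup : |a| ⊔ |b| = |a| + |b| := by
    have := inf_add_sup |a| |b|
    rw [h, zero_add] at this
    exact this
  have hdiff : |(|b| - |a|)| = |a| + |b| := by
    have := sup_sub_inf_eq_abs_sub |a| |b|
    rw [h, sub_zero, hsup] at this
    exact this.symm
  rw [← hdiff]
  have h1 : |a| - |b| ≤ |a + b| := by
    have h' : |a| ≤ |a + b| + |b| := by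
      calc |a| = |(a + b) + (-b)| := by rw [add_neg_cancel_right]
        _ ≤ |a + b| + |-b| := abs_add_le _ _
        _ = |a + b| + |b| := by rw [abs_neg]
    exact sub_le_iff_le_add.mpr h'
  have h2 : |b| - |a| ≤ |a + b| := by
    have h' : |b| ≤ |a + b| + |a| := by
      calc |b| = |(a + b) + (-a)| := by rw [add_comm a b, add_neg_cancel_right]
        _ ≤ |a + b| + |-a| := abs_add_le _ _
        _ = |a + b| + |a| := by rw [abs_neg]
    exact sub_le_iff_le_add.mpr h'
  rw [abs]
  exact sup_le h2 (by simpa using h1)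

/-- In a KB-space (a Banach lattice in which every increasing norm-bounded sequence
of positive elements is norm convergent), every norm bounded laterally Cauchy
sequence laterally norm converges. -/
theorem latCauchy_latn_of_KB {E : Type*} [NormedAddCommGroup E] [Lattice E]
    [HasSolidNorm E] [IsOrderedAddMonoid E]
    [NormedSpace ℝ E] [CompleteSpace E]
    (hKB : ∀ y : ℕ → E, Monotone y → (∀ n, 0 ≤ y n) → (∃ C : ℝ, ∀ n, ‖y n‖ ≤ C) →
      ∃ l : E, Tendsto y atTop (nhds l))
    (x : ℕ → E) (hbdd : ∃ C : ℝ, ∀ n, ‖x n‖ ≤ C)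
    (hlatCauchy : ∀ n m, n ≤ m → Fragment (x n) (x m)) :
    ∃ l : E, (∀ n, Fragment (x n) l) ∧
      Tendsto (fun n => ‖x n - l‖) atTop (nhds 0) := by
  have key : ∀ n m, n ≤ m → |x m| = |x n| + |x m - x n| := by
    intro n m hnm
    have h := hlatCauchy n m hnm
    have := abs_add_of_disj (x n) (x m - x n) h
    rw [add_sub_cancel] at this
    exact this
  -- the sequence |x n| is monotone, nonneg, bounded
  have hmono : Monotone (fun n => |x n|) := by
    intro n m hnm
    show |x n| ≤ |x m|
    rw [key n m hnm]
    simpa using abs_nonneg (x m - x n)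
  obtain ⟨C, hC⟩ := hbdd
  obtain ⟨l', hl'⟩ := hKB (fun n => |x n|) hmono (fun n => abs_nonneg _)
    ⟨C, fun n => by simpa [norm_abs_eq_norm] using hC n⟩
  -- x is Cauchy
  have hdist : ∀ n m, n ≤ m → ‖x m - x n‖ = ‖|x m| - |x n|‖ := by
    intro n m h
    rw [key n m h, add_sub_cancel_left, norm_abs_eq_norm]
  have hcauchy : CauchySeq x := by
    have hc' : CauchySeq (fun n => |x n|) := hl'.cauchySeq
    rw [Metric.cauchySeq_iff] at hc' ⊢
    intro ε hε
    obtain ⟨N, hN⟩ := hc' ε hε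
    refine ⟨N, fun m hm n hn => ?_⟩
    rcases le_total n m with h | h
    · have := hN m hm n hn
      rw [dist_eq_norm] at this ⊢
      rw [hdist n m h]; exact this
    · have := hN n hn m hm
      rw [dist_eq_norm] at this
      rw [dist_comm, dist_eq_norm, hdist m n h]; exact this
  obtain ⟨l, hl⟩ := cauchySeq_tendsto_of_complete hcauchy
  refine ⟨l, fun n => ?_, ?_⟩
  · -- Fragment (x n) l
    have habs : Tendsto (fun m => |x m - x n|) atTop (nhds |l - x n|) := by
      have h1 : Tendsto (fun m => x m - x n) atTop (nhds (l - x n)) :=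
        hl.sub_const (x n)
      have h2 : Tendsto (fun m => (x m - x n) ⊔ -(x m - x n)) atTop
          (nhds ((l - x n) ⊔ -(l - x n))) := h1.sup_nhds h1.neg
      simpa [abs] using h2
    have h3 : Tendsto (fun m => |x n| ⊓ |x m - x n|) atTop
        (nhds (|x n| ⊓ |l - x n|)) := tendsto_const_nhds.inf_nhds habs
    have h4 : Tendsto (fun m => |x n| ⊓ |x m - x n|) atTop (nhds (0 : E)) := by
      apply Tendsto.congr' _ (tendsto_const_nhds (x := (0 : E)))
      filter_upwards [eventually_ge_atTop n] with m hm
      exact (hlatCauchy n m hm).symm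
    exact tendsto_nhds_unique h3 h4
  · have : Tendsto (fun n => x n - l) atTop (nhds 0) := by
      simpa using hl.sub_const l
    simpa using this.norm
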